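/- Let q be a prime power. The number of dynamical-equivalence classes among the maps F_q → F_q of the form x ↦ a x + b with a ∈ F_q^* and b ∈ F_q is exactly τ(q − 1) + 1, where τ(n) is the number of positive divisors of n. -/

import Mathlib

/-- Two self-maps `f g : α → α` are dynamically equivalent if there is a bijection
`σ : α → α` with `σ⁻¹ ∘ g ∘ σ = f`. -/
def DynEquiv {α : Type*} (f g : α → α) : Prop :=
  ∃ σ : Equiv.Perm α, ∀ x, σ.symm (g (σ x)) = f x

/-- The number of dynamical-equivalence classes represented by the elements of a set `S`
of self-maps. -/
noncomputable def numDynClasses {α : Type*} (S : Set (α → α)) : ℕ :=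
  Nat.card (Quot (fun f g : S => DynEquiv f.1 g.1))

open Function Subgroup

section Basic
variable {α : Type*} {f g h : α → α}

lemma DynEquiv.refl (f : α → α) : DynEquiv f f := ⟨Equiv.refl α, fun _ => rfl⟩

lemma DynEquiv.symm (hfg : DynEquiv f g) : DynEquiv g f := by
  obtain ⟨σ, hσ⟩ := hfg
  refine ⟨σ.symm, fun x => ?_⟩
  have := hσ (σ.symm x)
  simp only [Equiv.apply_symm_apply] at this
  simp [← this]

lemma DynEquiv.trans (hfg : DynEquiv f g) (hgh : DynEquiv g h) : DynEquiv f h := by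
  obtain ⟨σ, hσ⟩ := hfg
  obtain ⟨τ, hτ⟩ := hgh
  refine ⟨σ.trans τ, fun x => ?_⟩
  simp only [Equiv.trans_apply, Equiv.symm_trans_apply]
  rw [hτ (σ x), hσ x]

lemma DynEquiv.iterate {σ : Equiv.Perm α} (hσ : ∀ x, σ.symm (g (σ x)) = f x)
    (n : ℕ) (x : α) : σ.symm (g^[n] (σ x)) = f^[n] x := by
  induction n generalizing x with
  | zero => simp
  | succ n ih =>
    rw [Function.iterate_succ_apply, Function.iterate_succ_apply]
    rw [← ih (f x), ← hσ x, Equiv.apply_symm_apply]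

/-- order of a self-map: least positive n with `f^[n] = id` -/
noncomputable def mapOrd {α : Type*} (f : α → α) : ℕ := sInf {n | 0 < n ∧ f^[n] = id}

lemma DynEquiv.mapOrd_eq (hfg : DynEquiv f g) : mapOrd f = mapOrd g := by
  have key : ∀ {f g : α → α}, DynEquiv f g → ∀ n, g^[n] = id → f^[n] = id := by
    intro f g ⟨σ, hσ⟩ n hn
    funext x
    have := DynEquiv.iterate hσ n x
    rw [hn] at this
    simpa using this.symm
  unfold mapOrd
  congr 1
  ext n
  exact and_congr_right fun _ => ⟨fun h' => key hfg.symm n h', fun h' => key hfg n h'⟩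

lemma sInf_dvd_set {d : ℕ} (hd : 0 < d) : sInf {n | 0 < n ∧ d ∣ n} = d :=
  le_antisymm (Nat.sInf_le ⟨hd, dvd_refl d⟩)
    (le_csInf ⟨d, hd, dvd_refl d⟩ fun n hn => Nat.le_of_dvd hn.1 hn.2)

end Basic

section Cyclic

lemma exists_pow_eq_of_orderOf_eq {G : Type*} [Group G] [Fintype G] [IsCyclic G]
    {a a' : G} (h : orderOf a = orderOf a') : ∃ m : ℕ, a ^ m = a' := by
  classical
  have hd : 0 < orderOf a := orderOf_pos a
  have h1 : Finset.univ.filter (fun b => b ∈ zpowers a) ⊆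
      Finset.univ.filter (fun b => b ^ orderOf a = 1) := by
    intro b hb
    simp only [Finset.mem_filter, Finset.mem_univ, true_and] at hb ⊢
    obtain ⟨k, rfl⟩ := mem_powers_iff_mem_zpowers.mpr hb
    rw [← pow_mul, mul_comm, pow_mul, pow_orderOf_eq_one, one_pow]
  have hcard : (Finset.univ.filter (fun b => b ∈ zpowers a)).card = orderOf a := by
    rw [← Fintype.card_subtype]
    exact Fintype.card_zpowers
  have h2 : Finset.univ.filter (fun b => b ^ orderOf a = 1) =
      Finset.univ.filter (fun b => b ∈ zpowers a) := by
    refine (Finset.eq_of_subset_of_card_le h1 ?_).symm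
    rw [hcard]
    exact IsCyclic.card_pow_eq_one_le hd
  have ha' : a' ∈ Finset.univ.filter (fun b => b ^ orderOf a = 1) := by
    simp only [Finset.mem_filter, Finset.mem_univ, true_and, h, pow_orderOf_eq_one]
  rw [h2] at ha'
  simp only [Finset.mem_filter, Finset.mem_univ, true_and] at ha'
  exact (Submonoid.mem_powers_iff _ _).mp (mem_powers_iff_mem_zpowers.mpr ha')

lemma exists_coprime_pow_eq {G : Type*} [Group G] [Fintype G] [IsCyclic G]
    {a a' : G} (h : orderOf a = orderOf a') :
    ∃ k : ℕ, 0 < k ∧ Nat.Coprime k (Fintype.card G) ∧ a ^ k = a' := by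
  obtain ⟨m, hm⟩ := exists_pow_eq_of_orderOf_eq h
  have hd : 0 < orderOf a := orderOf_pos a
  have hdn : orderOf a ∣ Fintype.card G := orderOf_dvd_card
  have hn0 : 0 < Fintype.card G := Fintype.card_pos
  have hmd : Nat.Coprime m (orderOf a) := by
    have h1 : orderOf (a ^ m) = orderOf a / Nat.gcd (orderOf a) m := orderOf_pow a
    rw [hm, ← h] at h1
    rcases Nat.div_eq_self.mp h1.symm with h0 | h1
    · omega
    · exact Nat.coprime_comm.mp h1
  haveI : NeZero (Fintype.card G) := ⟨hn0.ne'⟩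
  haveI : NeZero (orderOf a) := ⟨hd.ne'⟩
  obtain ⟨v, hv⟩ := ZMod.unitsMap_surjective hdn (ZMod.unitOfCoprime m hmd)
  have hkcop : Nat.Coprime ((v : ZMod (Fintype.card G)).val) (Fintype.card G) :=
    ZMod.val_coe_unit_coprime v
  have hkm : (v : ZMod (Fintype.card G)).val ≡ m [MOD orderOf a] := by
    rw [← ZMod.natCast_eq_natCast_iff]
    have h2 : ((ZMod.unitsMap hdn v : (ZMod (orderOf a))ˣ) : ZMod (orderOf a))
        = ((m : ℕ) : ZMod (orderOf a)) := by
      rw [hv]; simp [ZMod.coe_unitOfCoprime]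
    rw [ZMod.unitsMap] at h2
    simp only [Units.coe_map, MonoidHom.coe_coe] at h2
    rw [← h2, ZMod.natCast_val, ZMod.castHom_apply]
  refine ⟨(v : ZMod (Fintype.card G)).val + Fintype.card G, by omega,
    by rwa [Nat.coprime_add_self_left], ?_⟩
  rw [pow_add, pow_card_eq_one, mul_one, ← hm, pow_eq_pow_iff_modEq]
  exact hkm

end Cyclic

section FieldLemmas
variable {F : Type*} [Field F] [Fintype F]

omit [Fintype F] in
lemma iterMulApply (a : F) (n : ℕ) (x : F) :
    (fun y : F => a * y)^[n] x = a ^ n * x := by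
  induction n generalizing x with
  | zero => simp
  | succ n ih => rw [Function.iterate_succ_apply, ih, pow_succ]; ring

omit [Fintype F] in
lemma iterAddApply (b : F) (n : ℕ) (x : F) :
    (fun y : F => y + b)^[n] x = x + (n : F) * b := by
  induction n generalizing x with
  | zero => simp
  | succ n ih => rw [Function.iterate_succ_apply, ih]; push_cast; ring

omit [Fintype F] in
lemma iterate_mul_eq_id_iff (a : Fˣ) (n : ℕ) :
    (fun y : F => (a : F) * y)^[n] = id ↔ orderOf a ∣ n := by
  constructor
  · intro h
    have h1 := congrFun h 1
    rw [iterMulApply] at h1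
    simp only [mul_one, id_eq] at h1
    have : a ^ n = 1 := Units.ext (by push_cast; simpa using h1)
    exact orderOf_dvd_of_pow_eq_one this
  · intro h
    funext x
    have h1 : a ^ n = 1 := orderOf_dvd_iff_pow_eq_one.mp h
    rw [iterMulApply]
    have h2 : ((a : F)) ^ n = 1 := by
      rw [← Units.val_pow_eq_pow_val, h1, Units.val_one]
    simp [h2]

omit [Fintype F] in
lemma mapOrd_mul (a : Fˣ) (ha : (0 : ℕ) < orderOf a) :
    mapOrd (fun x : F => (a : F) * x) = orderOf a := by
  unfold mapOrd
  have hset : {n | 0 < n ∧ (fun x : F => (a : F) * x)^[n] = id}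
      = {n | 0 < n ∧ orderOf a ∣ n} := by
    ext n
    exact and_congr_right fun _ => iterate_mul_eq_id_iff a n
  rw [hset, sInf_dvd_set ha]

lemma mapOrd_add (b : F) (hb : b ≠ 0) : mapOrd (fun x : F => x + b) = ringChar F := by
  haveI := ringChar.charP F
  have hp : (ringChar F).Prime := CharP.char_is_prime F (ringChar F)
  have hset : {n | 0 < n ∧ (fun x : F => x + b)^[n] = id}
      = {n | 0 < n ∧ ringChar F ∣ n} := by
    ext n
    refine and_congr_right fun _ => ?_
    constructor
    · intro h
      have h0 := congrFun h 0
      rw [iterAddApply] at h0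
      simp only [zero_add, id_eq] at h0
      rcases mul_eq_zero.mp h0 with h1 | h1
      · exact (CharP.cast_eq_zero_iff F (ringChar F) n).mp h1
      · exact absurd h1 hb
    · intro h
      funext x
      have h1 : ((n : F)) = 0 := (CharP.cast_eq_zero_iff F (ringChar F) n).mpr h
      rw [iterAddApply, h1]
      simp
  unfold mapOrd
  rw [hset, sInf_dvd_set hp.pos]

omit [Fintype F] in
lemma dynEquiv_mul_affine (a : Fˣ) (b : F) (ha : (a : F) ≠ 1) :
    DynEquiv (fun x : F => (a : F) * x) (fun x : F => (a : F) * x + b) := by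
  refine ⟨Equiv.addRight (b / (1 - (a : F))), fun x => ?_⟩
  have h1 : (1 : F) - a ≠ 0 := sub_ne_zero.mpr (Ne.symm ha)
  simp only [Equiv.addRight_symm_apply, Equiv.coe_addRight]
  field_simp
  ring

omit [Fintype F] in
lemma dynEquiv_add_add (b b' : F) (hb : b ≠ 0) (hb' : b' ≠ 0) :
    DynEquiv (fun x : F => x + b) (fun x : F => x + b') := by
  refine ⟨Equiv.mulLeft₀ (b' / b) (div_ne_zero hb' hb), fun x => ?_⟩
  simp only [Equiv.mulLeft₀_symm_apply, Equiv.mulLeft₀_apply]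
  field_simp

lemma dynEquiv_mul_mul (a a' : Fˣ) (h : orderOf a = orderOf a') :
    DynEquiv (fun x : F => (a : F) * x) (fun x : F => (a' : F) * x) := by
  classical
  obtain ⟨k, hk0, hkcop, hk⟩ := exists_coprime_pow_eq h
  have hucop : (Nat.card Fˣ).Coprime k := by
    rw [Nat.card_eq_fintype_card, Nat.coprime_comm]; exact hkcop
  have huinj : Function.Injective (fun u : Fˣ => u ^ k) := hucop.pow_left_bijective.injective
  have hinj : Function.Injective (fun x : F => x ^ k) := by
    intro x y hxy
    simp only at hxy
    rcases eq_or_ne x 0 with rfl | hx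
    · rw [zero_pow hk0.ne', eq_comm, pow_eq_zero_iff hk0.ne'] at hxy
      exact hxy.symm
    rcases eq_or_ne y 0 with rfl | hy
    · rw [zero_pow hk0.ne', pow_eq_zero_iff hk0.ne'] at hxy
      exact hxy
    have := huinj (a₁ := Units.mk0 x hx) (a₂ := Units.mk0 y hy)
      (Units.ext (by simpa using hxy))
    simpa using congrArg Units.val this
  let σ : Equiv.Perm F := Equiv.ofBijective _ ((Fintype.bijective_iff_injective_and_card _).mpr
    ⟨hinj, rfl⟩)
  refine ⟨σ, fun x => ?_⟩
  have hσ : ∀ y : F, σ y = y ^ k := fun y => rfl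
  rw [Equiv.symm_apply_eq, hσ, hσ, mul_pow]
  rw [← hk]
  push_cast
  rfl

omit [Fintype F] in
lemma normalizeAffine (a : Fˣ) (b : F) :
    ((a : F) = 1 ∧ b ≠ 0 ∧ DynEquiv (fun x : F => x + b) (fun x : F => (a : F) * x + b)) ∨
    DynEquiv (fun x : F => (a : F) * x) (fun x : F => (a : F) * x + b) := by
  rcases eq_or_ne ((a : F)) 1 with ha | ha
  · rcases eq_or_ne b 0 with rfl | hb
    · right; exact ⟨Equiv.refl F, fun x => by simp⟩
    · left; exact ⟨ha, hb, ⟨Equiv.refl F, fun x => by simp [ha]⟩⟩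
  · right; exact dynEquiv_mul_affine a b ha

lemma mapOrd_affine_char (a : Fˣ) (b : F) (ha : (a : F) = 1) (hb : b ≠ 0) :
    mapOrd (fun x : F => (a : F) * x + b) = ringChar F := by
  have hfun : (fun x : F => (a : F) * x + b) = fun x : F => x + b := by
    funext x; rw [ha, one_mul]
  rw [hfun, mapOrd_add b hb]

lemma mapOrd_affine_ord (a : Fˣ) (b : F) (h : ¬((a : F) = 1 ∧ b ≠ 0)) :
    mapOrd (fun x : F => (a : F) * x + b) = orderOf a := by
  rcases normalizeAffine a b with ⟨ha, hb, _⟩ | hf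
  · exact absurd ⟨ha, hb⟩ h
  · rw [← hf.mapOrd_eq, mapOrd_mul a (orderOf_pos a)]

lemma char_not_dvd_sub_one : ¬ (ringChar F ∣ Fintype.card F - 1) := by
  haveI := ringChar.charP F
  have hp : (ringChar F).Prime := CharP.char_is_prime F (ringChar F)
  obtain ⟨n, hn, hcard⟩ := FiniteField.card F (ringChar F)
  intro hdvd
  have h1 : ringChar F ∣ Fintype.card F := by
    rw [hcard]
    exact dvd_pow_self _ (by positivity)
  have h2 : ringChar F ∣ Fintype.card F - (Fintype.card F - 1) := Nat.dvd_sub h1 hdvd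
  have h3 : 1 ≤ Fintype.card F := Fintype.card_pos
  rw [Nat.sub_sub_self h3] at h2
  exact hp.ne_one (Nat.dvd_one.mp h2)

lemma orderOf_units_dvd (a : Fˣ) : orderOf a ∣ Fintype.card F - 1 := by
  have h1 : orderOf a ∣ Nat.card Fˣ := orderOf_dvd_natCard a
  rwa [Nat.card_units, Nat.card_eq_fintype_card] at h1

lemma dynEquiv_of_mapOrd_eq (a a' : Fˣ) (b b' : F)
    (h : mapOrd (fun x : F => (a : F) * x + b) = mapOrd (fun x : F => (a' : F) * x + b')) :
    DynEquiv (fun x : F => (a : F) * x + b) (fun x : F => (a' : F) * x + b') := by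
  rcases normalizeAffine a b with ⟨ha, hb, hf⟩ | hf <;>
    rcases normalizeAffine a' b' with ⟨ha', hb', hg⟩ | hg
  · exact (hf.symm.trans (dynEquiv_add_add b b' hb hb')).trans hg
  · exfalso
    apply char_not_dvd_sub_one (F := F)
    have h1 : mapOrd (fun x : F => (a : F) * x + b) = ringChar F := mapOrd_affine_char a b ha hb
    have h2 : mapOrd (fun x : F => (a' : F) * x + b') = orderOf a' := by
      rw [← hg.mapOrd_eq, mapOrd_mul a' (orderOf_pos a')]
    rw [h1, h2] at h
    rw [h]
    exact orderOf_units_dvd a'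
  · exfalso
    apply char_not_dvd_sub_one (F := F)
    have h1 : mapOrd (fun x : F => (a' : F) * x + b') = ringChar F :=
      mapOrd_affine_char a' b' ha' hb'
    have h2 : mapOrd (fun x : F => (a : F) * x + b) = orderOf a := by
      rw [← hf.mapOrd_eq, mapOrd_mul a (orderOf_pos a)]
    rw [h1, h2] at h
    rw [← h]
    exact orderOf_units_dvd a
  · have hord : orderOf a = orderOf a' := by
      have h1 : mapOrd (fun x : F => (a : F) * x + b) = orderOf a := by
        rw [← hf.mapOrd_eq, mapOrd_mul a (orderOf_pos a)]
      have h2 : mapOrd (fun x : F => (a' : F) * x + b') = orderOf a' := by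
        rw [← hg.mapOrd_eq, mapOrd_mul a' (orderOf_pos a')]
      rw [h1, h2] at h
      exact h
    exact (hf.symm.trans (dynEquiv_mul_mul a a' hord)).trans hg

end FieldLemmas

theorem stmt6 {F : Type*} [Field F] [Fintype F] (q : ℕ) (hq : Fintype.card F = q) :
    numDynClasses {f : F → F | ∃ (a : Fˣ) (b : F), f = fun x => (a : F) * x + b} =
      (q - 1).divisors.card + 1 := by
  classical
  haveI := ringChar.charP F
  have hp : (ringChar F).Prime := CharP.char_is_prime F (ringChar F)
  have hq2 : 2 ≤ q := hq ▸ Fintype.one_lt_card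
  subst hq
  set q := Fintype.card F with hqdef
  set S : Set (F → F) := {f : F → F | ∃ (a : Fˣ) (b : F), f = fun x => (a : F) * x + b}
    with hS
  set T : Finset ℕ := insert (ringChar F) ((q - 1).divisors) with hT
  have hpnot : ringChar F ∉ (q - 1).divisors := by
    intro hmem
    exact char_not_dvd_sub_one (F := F) (Nat.mem_divisors.mp hmem).1
  -- the invariant map descends to the quotient
  have hmemT : ∀ f : S, mapOrd f.1 ∈ T := by
    rintro ⟨f, a, b, rfl⟩
    by_cases hab : (a : F) = 1 ∧ b ≠ 0
    · rw [mapOrd_affine_char a b hab.1 hab.2]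
      exact Finset.mem_insert_self _ _
    · rw [mapOrd_affine_ord a b hab]
      refine Finset.mem_insert_of_mem (Nat.mem_divisors.mpr ⟨orderOf_units_dvd a, ?_⟩)
      omega
  set r : S → S → Prop := fun f g => DynEquiv f.1 g.1 with hr
  have key : ∀ f g : S, mapOrd f.1 = mapOrd g.1 → DynEquiv f.1 g.1 := by
    rintro ⟨f, a, b, rfl⟩ ⟨g, a', b', rfl⟩ h
    exact dynEquiv_of_mapOrd_eq a a' b b' h
  let Φ : Quot r → {n // n ∈ T} :=
    Quot.lift (fun f => (⟨mapOrd f.1, hmemT f⟩ : {n // n ∈ T}))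
      (fun f g hfg => Subtype.ext hfg.mapOrd_eq)
  have hinj : Function.Injective Φ := by
    refine Quot.ind fun f => Quot.ind fun g h => Quot.sound (key f g ?_)
    have h2 := congrArg Subtype.val h
    simpa [Φ] using h2
  have hsurj : Function.Surjective Φ := by
    rintro ⟨n, hn⟩
    rcases Finset.mem_insert.mp hn with rfl | hn
    · have h1 : ((1 : F)) ≠ 0 := one_ne_zero
      refine ⟨Quot.mk r ⟨fun x => ((1 : Fˣ) : F) * x + 1, ⟨1, 1, rfl⟩⟩, ?_⟩
      apply Subtype.ext
      simp only [Φ]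
      exact mapOrd_affine_char 1 1 (by simp) h1
    · obtain ⟨hdvd, hne⟩ := Nat.mem_divisors.mp hn
      obtain ⟨g, hg⟩ := IsCyclic.exists_generator (α := Fˣ)
      have hog : orderOf g = q - 1 := by
        rw [orderOf_eq_card_of_forall_mem_zpowers hg, Nat.card_units,
          Nat.card_eq_fintype_card]
      have hgne : orderOf g ≠ 0 := by omega
      have hdvd' : n ∣ orderOf g := hog ▸ hdvd
      have hord : orderOf (g ^ (orderOf g / n)) = n := orderOf_pow_orderOf_div hgne hdvd'
      refine ⟨Quot.mk r ⟨fun x => ((g ^ (orderOf g / n) : Fˣ) : F) * x + 0,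
        ⟨g ^ (orderOf g / n), 0, rfl⟩⟩, ?_⟩
      apply Subtype.ext
      simp only [Φ]
      rw [mapOrd_affine_ord _ 0 (by simp), hord]
  have hbij : Function.Bijective Φ := ⟨hinj, hsurj⟩
  have hcount : numDynClasses S = Nat.card {n // n ∈ T} := by
    unfold numDynClasses
    exact Nat.card_eq_of_bijective Φ hbij
  rw [hcount, Nat.card_eq_fintype_card, Fintype.card_coe, hT,
    Finset.card_insert_of_notMem hpnot]
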